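/- arXiv:1705.01501 — 3 statements merged into one kernel-verified Lean document; each statement's English description precedes it below -/
import Mathlib

section
/- For any alphabet α, any letter a : α, and any n : ℕ, the language of words containing at least n occurrences of a equals the language (⊤ * {[a]})^n * ⊤, where ⊤ is the language of all words and * denotes language concatenation. That is, { w : List α | n ≤ w.count a } = ((⊤ : Language α) * {[a]})^n * ⊤. -/
private lemma pow_count {α : Type*} [DecidableEq α] (a : α) :
    ∀ n (x : List α), x ∈ ((⊤ : Language α) * ({[a]} : Language α)) ^ n → n ≤ x.count a := by
  intro n
  induction n with
  | zero => simp
  | succ k ih =>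
    intro x hx
    rw [pow_succ, Language.mem_mul] at hx
    obtain ⟨u, hu, v, hv, rfl⟩ := hx
    rw [Language.mem_mul] at hv
    obtain ⟨p, _, q, hq, rfl⟩ := hv
    obtain rfl : q = [a] := hq
    have := ih u hu
    simp [List.count_append]
    omega

private lemma prep_mem {α : Type*} [DecidableEq α] (a : α) (n : ℕ) (u x : List α)
    (h : x ∈ ((⊤ : Language α) * ({[a]} : Language α)) ^ (n + 1) * (⊤ : Language α)) :
    u ++ x ∈ ((⊤ : Language α) * ({[a]} : Language α)) ^ (n + 1) * (⊤ : Language α) := by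
  rw [Language.mem_mul] at h
  obtain ⟨p, hp, y, _, rfl⟩ := h
  rw [pow_succ', Language.mem_mul] at hp
  obtain ⟨q, hq, r, hr, rfl⟩ := hp
  rw [Language.mem_mul] at hq
  obtain ⟨s, _, t, ht, rfl⟩ := hq
  rw [Language.mem_mul]
  refine ⟨((u ++ s) ++ t) ++ r, ?_, y, trivial, by simp⟩
  rw [pow_succ']
  exact Language.append_mem_mul (Language.append_mem_mul trivial ht) hr

theorem threshold_counting_language {α : Type*} [DecidableEq α] (a : α) (n : ℕ) :
    { w : List α | n ≤ w.count a } =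
      ((⊤ : Language α) * ({[a]} : Language α)) ^ n * (⊤ : Language α) := by
  ext w
  simp only [Set.mem_setOf_eq]
  show _ ↔ w ∈ (((⊤ : Language α) * ({[a]} : Language α)) ^ n * (⊤ : Language α))
  constructor
  · intro h
    induction w generalizing n with
    | nil =>
      simp at h
      subst h
      rw [pow_zero, one_mul]
      trivial
    | cons b w ih =>
      match n with
      | 0 =>
        rw [pow_zero, one_mul]
        trivial
      | k + 1 =>
        by_cases hb : b = a
        · subst hb
          have hc : k ≤ w.count b := by simp [List.count_cons] at h; omega
          have hm := ih k hc
          rw [Language.mem_mul] at hm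
          obtain ⟨x, hx, y, _, rfl⟩ := hm
          rw [Language.mem_mul]
          refine ⟨[b] ++ x, ?_, y, trivial, by simp⟩
          rw [pow_succ']
          exact Language.append_mem_mul
            (Language.append_mem_mul (Set.mem_univ ([] : List α)) (Set.mem_singleton [b])) hx
        · have hne : ¬ a = b := fun h' => hb h'.symm
          have hc : k + 1 ≤ w.count a := by
            simp [List.count_cons, hne, hb] at h; exact h
          exact prep_mem a k [b] w (ih (k+1) hc)
  · intro h
    rw [Language.mem_mul] at h
    obtain ⟨x, hx, y, _, rfl⟩ := h
    have := pow_count a n x hx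
    simp [List.count_append]
    omega
end

section
/- Fix an alphabet α, a letter a : α, and natural numbers n ≥ 1 and k < n. Let N = { w : List α | ∀ x ∈ w, x ≠ a } be the language of words avoiding a. Then the language of all words whose number of occurrences of a is congruent to k modulo n equals ((N * {[a]})^n)∗ * (N * {[a]})^k * N, where ∗ denotes Kleene star. That is, { w | w.count a % n = k } = (KStar ((N * {[a]})^n)) * (N * {[a]})^k * N. -/
open Language

private lemma count_of_mem_P {α : Type*} [DecidableEq α] {a : α} {N : Language α}
    (hN : N = { w : List α | ∀ x ∈ w, x ≠ a }) {w : List α}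
    (hw : w ∈ N * ({[a]} : Language α)) : w.count a = 1 := by
  obtain ⟨u, hu, v, hv, rfl⟩ := Language.mem_mul.mp hw
  replace hv : v = [a] := hv
  subst hv hN
  rw [List.count_append]
  have : u.count a = 0 := List.count_eq_zero.mpr (fun h => hu a h rfl)
  simp [this]

private lemma count_of_mem_pow {α : Type*} [DecidableEq α] {a : α} {N : Language α}
    (hN : N = { w : List α | ∀ x ∈ w, x ≠ a }) (m : ℕ) {w : List α}
    (hw : w ∈ (N * ({[a]} : Language α)) ^ m) : w.count a = m := by
  induction m generalizing w with
  | zero => rw [pow_zero, Language.mem_one] at hw; simp [hw]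
  | succ s ih =>
    rw [pow_succ, Language.mem_mul] at hw
    obtain ⟨u, hu, v, hv, rfl⟩ := hw
    rw [List.count_append, ih hu, count_of_mem_P hN hv]

private lemma cons_mem_pow_mul {α : Type*} [DecidableEq α] {a x : α} {N : Language α}
    (hN : N = { w : List α | ∀ x ∈ w, x ≠ a }) (hx : x ≠ a) (m : ℕ) {w : List α}
    (hw : w ∈ (N * ({[a]} : Language α)) ^ m * N) :
    x :: w ∈ (N * ({[a]} : Language α)) ^ m * N := by
  cases m with
  | zero =>
    rw [pow_zero, one_mul] at hw ⊢
    subst hN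
    intro y hy
    rcases List.mem_cons.mp hy with rfl | hy
    · exact hx
    · exact hw y hy
  | succ s =>
    rw [pow_succ', mul_assoc, Language.mem_mul] at hw ⊢
    obtain ⟨u, hu, v, hv, rfl⟩ := hw
    obtain ⟨p, hp, q, hq, rfl⟩ := Language.mem_mul.mp hu
    replace hq : q = [a] := hq
    refine ⟨x :: p ++ q, Language.mem_mul.mpr ⟨x :: p, ?_, q, hq, rfl⟩, v, hv, by simp⟩
    subst hN
    intro y hy
    rcases List.mem_cons.mp hy with rfl | hy
    · exact hx
    · exact hp y hy

private lemma mem_pow_mul_of_count {α : Type*} [DecidableEq α] {a : α} {N : Language α}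
    (hN : N = { w : List α | ∀ x ∈ w, x ≠ a }) (w : List α) :
    w ∈ (N * ({[a]} : Language α)) ^ (w.count a) * N := by
  induction w with
  | nil =>
    rw [List.count_nil, pow_zero, one_mul, hN]
    intro y hy; simp at hy
  | cons x w ih =>
    by_cases hx : x = a
    · subst hx
      rw [List.count_cons_self, pow_succ', mul_assoc, Language.mem_mul]
      refine ⟨[x], Language.mem_mul.mpr ⟨[], by rw [hN]; intro y hy; simp at hy, [x], rfl, rfl⟩,
        w, ih, rfl⟩
    · rw [List.count_cons_of_ne hx]
      exact cons_mem_pow_mul hN hx _ ih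

private lemma flatten_count {α : Type*} [DecidableEq α] {a : α} {N : Language α}
    (hN : N = { w : List α | ∀ x ∈ w, x ≠ a }) (n : ℕ) (L : List (List α))
    (hL : ∀ y ∈ L, y ∈ (N * ({[a]} : Language α)) ^ n) :
    ∃ c, (L.flatten).count a = n * c := by
  induction L with
  | nil => exact ⟨0, by simp⟩
  | cons y L ihL =>
    obtain ⟨c, hc⟩ := ihL (fun z hz => hL z (List.mem_cons_of_mem _ hz))
    refine ⟨c + 1, ?_⟩
    rw [List.flatten_cons, List.count_append, hc,
      count_of_mem_pow hN n (hL y List.mem_cons_self)]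
    ring

theorem modulo_counting_language {α : Type*} [DecidableEq α] (a : α) (n k : ℕ)
    (hn : 1 ≤ n) (hk : k < n)
    (N : Language α) (hN : N = { w : List α | ∀ x ∈ w, x ≠ a }) :
    { w : List α | w.count a % n = k } =
      KStar.kstar ((N * ({[a]} : Language α)) ^ n) *
        (N * ({[a]} : Language α)) ^ k * N := by
  set P : Language α := N * ({[a]} : Language α) with hP
  ext w
  simp only [Set.mem_setOf_eq]
  constructor
  · intro hw
    have h1 : w ∈ P ^ (w.count a) * N := mem_pow_mul_of_count hN w
    have hdecomp : w.count a = n * (w.count a / n) + k := by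
      conv_lhs => rw [← Nat.div_add_mod (w.count a) n, hw]
    rw [hdecomp, pow_add, pow_mul, mul_assoc] at h1
    obtain ⟨u, hu, v, hv, rfl⟩ := Language.mem_mul.mp h1
    obtain ⟨p, hp, q, hq, rfl⟩ := Language.mem_mul.mp hv
    change (_ : List α) ∈ (_ : Language α); rw [mul_assoc, Language.mem_mul]
    refine ⟨u, ?_, p ++ q, Language.mem_mul.mpr ⟨p, hp, q, hq, rfl⟩, rfl⟩
    rw [Language.kstar_eq_iSup_pow]
    exact Set.mem_iUnion.mpr ⟨_, hu⟩
  · intro hw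
    change (_ : List α) ∈ (_ : Language α) at hw; rw [mul_assoc, Language.mem_mul] at hw
    obtain ⟨u, hu, v, hv, rfl⟩ := hw
    obtain ⟨p, hp, q, hq, rfl⟩ := Language.mem_mul.mp hv
    obtain ⟨L, rfl, hL⟩ := Language.mem_kstar.mp hu
    obtain ⟨c, hc⟩ := flatten_count hN n L hL
    have hq0 : q.count a = 0 := by
      rw [hN] at hq
      exact List.count_eq_zero.mpr (fun h => hq a h rfl)
    rw [List.count_append, List.count_append, hc, count_of_mem_pow hN k hp, hq0,
      add_zero, Nat.mul_add_mod]
    exact Nat.mod_eq_of_lt hk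
end

section
/- Let S be a finite set of reals, u < v reals, and c ≥ 0. Suppose the parity of |S ∩ (u, u+c]| equals the parity of |S ∩ (v, v+c]|, and |S ∩ (u, v]| is odd. Then |S ∩ (u+c, v+c]| is odd; in particular S has at least one point in the interval (u+c, v+c]. -/
open scoped Classical

lemma interval_split (S : Finset ℝ) (a b d : ℝ) (h1 : a ≤ b) (h2 : b ≤ d) :
    (S.filter (fun t => a < t ∧ t ≤ d)).card =
      (S.filter (fun t => a < t ∧ t ≤ b)).card +
      (S.filter (fun t => b < t ∧ t ≤ d)).card := by
  classical
  rw [← Finset.card_union_of_disjoint]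
  · congr 1
    ext t
    simp only [Finset.mem_union, Finset.mem_filter]
    constructor
    · rintro ⟨hS, ha, hd⟩
      by_cases hb : t ≤ b
      · exact Or.inl ⟨hS, ha, hb⟩
      · exact Or.inr ⟨hS, lt_of_not_ge hb, hd⟩
    · rintro (⟨hS, ha, hb⟩ | ⟨hS, hb, hd⟩)
      · exact ⟨hS, ha, le_trans hb h2⟩
      · exact ⟨hS, lt_of_le_of_lt h1 hb, hd⟩
  · rw [Finset.disjoint_left]
    intro t ht ht'
    simp only [Finset.mem_filter] at ht ht'
    linarith [ht.2.2, ht'.2.1]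

theorem copy_lemma (S : Finset ℝ) (u v c : ℝ) (huv : u < v) (hc : 0 ≤ c)
    (hpar : (S.filter (fun t => u < t ∧ t ≤ u + c)).card % 2 =
            (S.filter (fun t => v < t ∧ t ≤ v + c)).card % 2)
    (hodd : Odd (S.filter (fun t => u < t ∧ t ≤ v)).card) :
    Odd (S.filter (fun t => u + c < t ∧ t ≤ v + c)).card ∧
      ∃ t ∈ S, u + c < t ∧ t ≤ v + c := by
  have h1 := interval_split S u v (v + c) huv.le (by linarith)
  have h2 := interval_split S u (u + c) (v + c) (by linarith) (by linarith)
  have hY : Odd (S.filter (fun t => u + c < t ∧ t ≤ v + c)).card := by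
    rw [Nat.odd_iff] at hodd ⊢
    omega
  refine ⟨hY, ?_⟩
  have hpos : 0 < (S.filter (fun t => u + c < t ∧ t ≤ v + c)).card := hY.pos
  obtain ⟨t, ht⟩ := Finset.card_pos.mp hpos
  simp only [Finset.mem_filter] at ht
  exact ⟨t, ht.1, ht.2⟩
end
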